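/- Let (K, δ) be a differential field of characteristic zero with field of constants C = {x ∈ K : δx = 0}, and let F be an intermediate field with C ⊆ F ⊆ K such that F has finite transcendence degree over C. Let Γ := {γ ∈ C : there exists a nonzero x ∈ F with δx = γ·x}, an additive subgroup of C. Then Γ has finite rank; more precisely, for every natural number n strictly greater than the transcendence degree of F over C, any n elements γ₁, …, γₙ of Γ are ℤ-linearly dependent, i.e., there exist integers e₁, …, eₙ, not all zero, with e₁γ₁ + ⋯ + eₙγₙ = 0 in K. -/

import Mathlib

/-- The field of constants `C = {x ∈ K : δ x = 0}` of a field `K` equipped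
with a derivation `δ` (an additive map satisfying the Leibniz rule). -/
def constantSubfield {K : Type*} [Field K] (δ : K → K)
    (hadd : ∀ x y, δ (x + y) = δ x + δ y)
    (hmul : ∀ x y, δ (x * y) = δ x * y + x * δ y) : Subfield K where
  carrier := {x | δ x = 0}
  zero_mem' := by
    have h : δ 0 + δ 0 = δ 0 + 0 := by rw [← hadd]; simp
    exact add_left_cancel h
  one_mem' := by
    have h : δ 1 + δ 1 = δ 1 + 0 := by
      have := hmul 1 1
      simp only [mul_one, one_mul] at this
      rw [← this]; simp
    exact add_left_cancel h
  add_mem' := by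
    intro a b ha hb
    simp only [Set.mem_setOf_eq] at *
    rw [hadd, ha, hb, add_zero]
  neg_mem' := by
    intro a ha
    simp only [Set.mem_setOf_eq] at *
    have h0 : δ 0 + δ 0 = δ 0 + 0 := by rw [← hadd]; simp
    have h0' : δ 0 = 0 := add_left_cancel h0
    have h := hadd a (-a)
    rw [add_neg_cancel, h0', ha, zero_add] at h
    exact h.symm
  mul_mem' := by
    intro a b ha hb
    simp only [Set.mem_setOf_eq] at *
    rw [hmul, ha, hb, zero_mul, mul_zero, add_zero]
  inv_mem' := by
    intro a ha
    simp only [Set.mem_setOf_eq] at *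
    rcases eq_or_ne a 0 with rfl | ha0
    · simpa using ha
    · have h1 : δ 1 + δ 1 = δ 1 + 0 := by
        have := hmul 1 1
        simp only [mul_one, one_mul] at this
        rw [← this]; simp
      have h1' : δ 1 = 0 := add_left_cancel h1
      have h := hmul a a⁻¹
      rw [mul_inv_cancel₀ ha0, h1', ha, zero_mul, zero_add] at h
      exact (mul_eq_zero.mp h.symm).resolve_left ha0

/-- The transcendence degree of `F` over `C`, for subfields `C ⊆ F` of a
field `K`: the supremum of the cardinalities of subsets of `F` that are
algebraically independent over `C`. -/
noncomputable def subfieldTrdeg {K : Type*} [Field K] (C F : Subfield K) : Cardinal :=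
  ⨆ s : {s : Set K // s ⊆ (F : Set K) ∧ AlgebraicIndependent C ((↑) : s → K)},
    Cardinal.mk s

section KolchinAux

variable {K : Type*} [Field K] (δ : K → K)
    (hadd : ∀ x y, δ (x + y) = δ x + δ y)
    (hmul : ∀ x y, δ (x * y) = δ x * y + x * δ y)

include hadd hmul

private lemma kol_delta_zero : δ 0 = 0 := by
  have h : δ 0 + δ 0 = δ 0 + 0 := by rw [← hadd]; simp
  exact add_left_cancel h

private lemma kol_delta_pow {y g : K} (h : δ y = g * y) (m : ℕ) :
    δ (y ^ m) = (m : K) * g * y ^ m := by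
  induction m with
  | zero =>
    simp only [pow_zero, Nat.cast_zero, zero_mul]
    have h1 : δ 1 + δ 1 = δ 1 + 0 := by
      have := hmul 1 1
      simp only [mul_one, one_mul] at this
      rw [← this]; simp
    exact add_left_cancel h1
  | succ m ih =>
    have := hmul (y ^ m) y
    rw [ih, h] at this
    rw [pow_succ, this]
    push_cast
    ring

private lemma kol_delta_prod {n : ℕ} (x γ : Fin n → K)
    (hx : ∀ i, δ (x i) = γ i * x i) (d : Fin n →₀ ℕ) :
    δ (∏ i, x i ^ d i) = (∑ i, (d i : K) * γ i) * ∏ i, x i ^ d i := by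
  classical
  have key : ∀ s : Finset (Fin n),
      δ (∏ i ∈ s, x i ^ d i) = (∑ i ∈ s, (d i : K) * γ i) * ∏ i ∈ s, x i ^ d i := by
    intro s
    induction s using Finset.induction_on with
    | empty =>
      simp only [Finset.prod_empty, Finset.sum_empty, zero_mul]
      have h1 : δ 1 + δ 1 = δ 1 + 0 := by
        have := hmul 1 1
        simp only [mul_one, one_mul] at this
        rw [← this]; simp
      exact add_left_cancel h1
    | insert a s hns ih =>
      rw [Finset.prod_insert hns, Finset.sum_insert hns, hmul,
        kol_delta_pow δ hadd hmul (hx a) (d a), ih]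
      ring
  exact key Finset.univ

end KolchinAux

set_option maxHeartbeats 1000000

/-- **Kolchin's lemma** (Fact 4.4 of Freitag–Moosa): let `(K, δ)` be a
differential field of characteristic zero with field of constants `C`,
and let `F` be an intermediate field, `C ⊆ F ⊆ K`, of finite transcendence
degree over `C`.  Then for every natural number `n` strictly greater than
`trdeg(F/C)`, any `n` elements `γ₁, …, γₙ` of
`Γ = {γ ∈ C : δ x = γ x has a nonzero solution in F}` are `ℤ`-linearly
dependent; in particular `Γ` is an additive group of finite rank. -/
theorem kolchin_multiplicative_ostrowski {K : Type*} [Field K] [CharZero K]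
    (δ : K → K)
    (hadd : ∀ x y, δ (x + y) = δ x + δ y)
    (hmul : ∀ x y, δ (x * y) = δ x * y + x * δ y)
    (F : Subfield K)
    (hCF : constantSubfield δ hadd hmul ≤ F)
    (hfin : subfieldTrdeg (constantSubfield δ hadd hmul) F < Cardinal.aleph0)
    (n : ℕ) (hn : subfieldTrdeg (constantSubfield δ hadd hmul) F < n)
    (γ : Fin n → K)
    (hγconst : ∀ i, δ (γ i) = 0)
    (hγsol : ∀ i, ∃ x : K, x ∈ F ∧ x ≠ 0 ∧ δ x = γ i * x) :
    ∃ e : Fin n → ℤ, e ≠ 0 ∧ ∑ i, (e i : K) * γ i = 0 := by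
  classical
  set C := constantSubfield δ hadd hmul with hC
  -- choose solutions
  choose x hxF hx0 hxδ using hγsol
  have hδ0 : δ 0 = 0 := kol_delta_zero δ hadd hmul
  have hδ1 : δ 1 = 0 := by
    have h1 : δ 1 + δ 1 = δ 1 + 0 := by
      have := hmul 1 1
      simp only [mul_one, one_mul] at this
      rw [← this]; simp
    exact add_left_cancel h1
  -- δ as an AddMonoidHom
  let D : K →+ K := AddMonoidHom.mk' δ hadd
  have hDnat : ∀ m : ℕ, δ ((m : K)) = 0 := by
    intro m
    have : ((m : K)) = m • (1 : K) := by simp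
    rw [this]
    calc δ (m • (1:K)) = D (m • 1) := rfl
    _ = m • D 1 := by rw [map_nsmul]
    _ = 0 := by show m • δ 1 = 0; rw [hδ1, smul_zero]
  -- the family x is not algebraically independent over C
  have hnotAI : ¬ AlgebraicIndependent C x := by
    intro hAI
    have hinj : Function.Injective x := hAI.injective
    have hsub : Set.range x ⊆ (F : Set K) := by
      rintro _ ⟨i, rfl⟩; exact hxF i
    have hAI' : AlgebraicIndependent C ((↑) : Set.range x → K) := hAI.to_subtype_range
    have hle : (Cardinal.mk (Set.range x)) ≤ subfieldTrdeg C F := by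
      exact le_ciSup (Cardinal.bddAbove_range _)
        (⟨Set.range x, hsub, hAI'⟩ : {s : Set K // s ⊆ (F : Set K) ∧ AlgebraicIndependent C ((↑) : s → K)})
    have hmk : Cardinal.mk (Set.range x) = n := by
      have := Cardinal.mk_range_eq_of_injective hinj
      simpa using this
    rw [hmk] at hle
    exact absurd (lt_of_le_of_lt hle hn) (lt_irrefl _)
  -- get a nonzero polynomial relation
  rw [algebraicIndependent_iff] at hnotAI
  push_neg at hnotAI
  -- choose one with minimal support
  have hex : ∃ k : ℕ, ∃ p : MvPolynomial (Fin n) C,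
      MvPolynomial.aeval x p = 0 ∧ p ≠ 0 ∧ p.support.card = k := by
    obtain ⟨p, h1, h2⟩ := hnotAI
    exact ⟨p.support.card, p, h1, h2, rfl⟩
  obtain ⟨p, hpz, hp0, hpcard⟩ := Nat.find_spec hex
  have hmin : ∀ q : MvPolynomial (Fin n) C, MvPolynomial.aeval x q = 0 → q ≠ 0 →
      p.support.card ≤ q.support.card := by
    intro q h1 h2
    by_contra hlt
    push_neg at hlt
    rw [hpcard] at hlt
    exact Nat.find_min hex hlt ⟨q, h1, h2, rfl⟩
  -- the weight of a monomial, as an element of C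
  let γ' : Fin n → C := fun i => ⟨γ i, hγconst i⟩
  let wC : (Fin n →₀ ℕ) → C := fun d => ∑ i, (d i : C) * γ' i
  have hwC : ∀ d : Fin n →₀ ℕ, ((wC d : K)) = ∑ i, (d i : K) * γ i := by
    intro d
    push_cast [wC]
    rfl
  -- evaluation of p as a sum
  have heval : ∀ q : MvPolynomial (Fin n) C, MvPolynomial.aeval x q
      = ∑ d ∈ q.support, (↑(MvPolynomial.coeff d q) : K) * ∏ i, x i ^ d i := by
    intro q
    rw [MvPolynomial.aeval_def, MvPolynomial.eval₂_eq']
    rfl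
  -- derivative of the evaluation
  have hδeval : δ (MvPolynomial.aeval x p)
      = ∑ d ∈ p.support, ((wC d : K)) * ((↑(MvPolynomial.coeff d p) : K) * ∏ i, x i ^ d i) := by
    rw [heval]
    calc δ (∑ d ∈ p.support, (↑(MvPolynomial.coeff d p) : K) * ∏ i, x i ^ d i)
        = D (∑ d ∈ p.support, (↑(MvPolynomial.coeff d p) : K) * ∏ i, x i ^ d i) := rfl
      _ = ∑ d ∈ p.support, D ((↑(MvPolynomial.coeff d p) : K) * ∏ i, x i ^ d i) := map_sum _ _ _
      _ = ∑ d ∈ p.support, ((wC d : K)) * ((↑(MvPolynomial.coeff d p) : K) * ∏ i, x i ^ d i) := by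
          refine Finset.sum_congr rfl fun d _ => ?_
          show δ _ = _
          rw [hmul]
          have hc : δ ((↑(MvPolynomial.coeff d p) : K)) = 0 := (MvPolynomial.coeff d p).2
          rw [hc, zero_mul, zero_add, kol_delta_prod δ hadd hmul x γ hxδ d, hwC]
          ring
  -- the polynomial q encoding the derivative
  set q : MvPolynomial (Fin n) C :=
    ∑ d ∈ p.support, MvPolynomial.monomial d (wC d * MvPolynomial.coeff d p) with hq
  have hcoeffq : ∀ d, MvPolynomial.coeff d q =
      if d ∈ p.support then wC d * MvPolynomial.coeff d p else 0 := by
    intro d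
    rw [hq, MvPolynomial.coeff_sum]
    rw [Finset.sum_congr rfl (fun d' _ => MvPolynomial.coeff_monomial d d' _)]
    simp [Finset.sum_ite_eq]
  have hqeval : MvPolynomial.aeval x q = 0 := by
    have : MvPolynomial.aeval x q
        = ∑ d ∈ p.support, ((wC d : K)) * ((↑(MvPolynomial.coeff d p) : K) * ∏ i, x i ^ d i) := by
      rw [hq, map_sum]
      refine Finset.sum_congr rfl fun d _ => ?_
      rw [MvPolynomial.aeval_monomial, Finsupp.prod_pow]
      show ((wC d * MvPolynomial.coeff d p : C) : K) * _ = _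
      push_cast
      ring
    rw [this, ← hδeval, hpz, hδ0]
  -- pick d₀ in the support
  have hsupp_ne : p.support.Nonempty := MvPolynomial.support_nonempty.2 hp0
  obtain ⟨d₀, hd₀⟩ := hsupp_ne
  -- r := q - (wC d₀) • p  vanishes and has smaller support, hence r = 0
  set r : MvPolynomial (Fin n) C := q - MvPolynomial.C (wC d₀) * p with hr
  have hreval : MvPolynomial.aeval x r = 0 := by
    rw [hr, map_sub, map_mul, hqeval, hpz, MvPolynomial.aeval_C, mul_zero, sub_zero]
  have hrcoeff : ∀ d, MvPolynomial.coeff d r =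
      (if d ∈ p.support then wC d * MvPolynomial.coeff d p else 0)
        - wC d₀ * MvPolynomial.coeff d p := by
    intro d
    rw [hr, MvPolynomial.coeff_sub, hcoeffq, MvPolynomial.coeff_C_mul]
  have hrsupp : r.support ⊆ p.support.erase d₀ := by
    intro d hd
    rw [MvPolynomial.mem_support_iff] at hd
    rw [hrcoeff] at hd
    rw [Finset.mem_erase, MvPolynomial.mem_support_iff]
    constructor
    · rintro rfl
      simp [hd₀] at hd
    · intro hc
      apply hd
      simp [MvPolynomial.mem_support_iff, hc]
  have hr0 : r = 0 := by
    by_contra hrne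
    have := hmin r hreval hrne
    have hlt : r.support.card < p.support.card := by
      calc r.support.card ≤ (p.support.erase d₀).card := Finset.card_le_card hrsupp
        _ < p.support.card := Finset.card_erase_lt_of_mem hd₀
    omega
  -- all weights on the support equal wC d₀
  have hweq : ∀ d ∈ p.support, wC d = wC d₀ := by
    intro d hd
    have : MvPolynomial.coeff d r = 0 := by rw [hr0]; simp
    rw [hrcoeff, if_pos hd] at this
    have hcd : MvPolynomial.coeff d p ≠ 0 := MvPolynomial.mem_support_iff.1 hd
    have h2 : (wC d - wC d₀) * MvPolynomial.coeff d p = 0 := by rw [sub_mul]; exact this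
    rcases mul_eq_zero.1 h2 with h | h
    · exact sub_eq_zero.1 h
    · exact absurd h hcd
  -- the support has at least two elements
  have hd₁ : ∃ d₁ ∈ p.support, d₁ ≠ d₀ := by
    by_contra hcon
    push_neg at hcon
    have hsing : p.support = {d₀} := by
      apply Finset.eq_singleton_iff_unique_mem.2
      exact ⟨hd₀, hcon⟩
    have := heval p
    rw [hpz, hsing, Finset.sum_singleton] at this
    have hprod : (∏ i, x i ^ d₀ i) ≠ 0 :=
      Finset.prod_ne_zero_iff.2 fun i _ => pow_ne_zero _ (hx0 i)
    have hcne : ((↑(MvPolynomial.coeff d₀ p) : K)) ≠ 0 := by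
      have := MvPolynomial.mem_support_iff.1 hd₀
      exact_mod_cast fun h => this (Subtype.ext h)
    exact (mul_ne_zero hcne hprod) this.symm
  obtain ⟨d₁, hd₁mem, hd₁ne⟩ := hd₁
  refine ⟨fun i => (d₁ i : ℤ) - (d₀ i : ℤ), ?_, ?_⟩
  · intro hcon
    apply hd₁ne
    ext i
    have := congrFun hcon i
    simp only [Pi.zero_apply, sub_eq_zero] at this
    exact_mod_cast this
  · have h1 := hweq d₁ hd₁mem
    have h2 : ((wC d₁ : K)) = ((wC d₀ : K)) := by rw [h1]
    rw [hwC, hwC] at h2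
    push_cast
    simp only [sub_mul]
    rw [Finset.sum_sub_distrib, sub_eq_zero]
    exact h2
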